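/- Let w and m be positive natural numbers with 2 ≤ m ≤ 2^w and suppose m does not divide 2^w. If J is uniformly distributed on {0, 1, …, 2^w − 1} and Y = 1 + ⌊m·J/2^w⌋, then (max_{1 ≤ k ≤ m} P(Y = k)) / (min_{1 ≤ k ≤ m} P(Y = k)) = (⌊2^w/m⌋ + 1)/⌊2^w/m⌋. -/

import Mathlib

/-- The probability that the multiply-and-floor method outputs `k`, when `J` is uniformly
distributed on `{0, 1, …, 2^w − 1}` and `Y = 1 + ⌊m·J/2^w⌋`:
`P(Y = k) = #{j < 2^w | 1 + ⌊m·j/2^w⌋ = k} / 2^w`. -/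
def floorMulProb (w m k : ℕ) : ℚ :=
  (((Finset.range (2 ^ w)).filter (fun j => 1 + m * j / 2 ^ w = k)).card : ℚ) / 2 ^ w

/-- if `2 ≤ m ≤ 2^w` and `m` does not divide `2^w`, then
`(max_{1 ≤ k ≤ m} P(Y = k)) / (min_{1 ≤ k ≤ m} P(Y = k)) = (⌊2^w/m⌋ + 1)/⌊2^w/m⌋`. -/
theorem floorMul_ratio_exact (w m : ℕ) (hw : 0 < w) (hm1 : 2 ≤ m) (hm2 : m ≤ 2 ^ w)
    (hnd : ¬ m ∣ 2 ^ w) (hm : 1 ≤ m) :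
    (Finset.Icc 1 m).sup' (Finset.nonempty_Icc.mpr hm) (floorMulProb w m) /
        (Finset.Icc 1 m).inf' (Finset.nonempty_Icc.mpr hm) (floorMulProb w m)
      = ((2 ^ w / m : ℕ) + 1 : ℚ) / (2 ^ w / m : ℕ) := by
  set N := 2 ^ w with hNdef
  have hN0 : 0 < N := pow_pos (by norm_num) w
  have hm0 : 0 < m := by omega
  set q := N / m with hqdef
  have hdm : m * q + N % m = N := Nat.div_add_mod N m
  have hr0 : 0 < N % m := Nat.pos_of_ne_zero fun h => hnd (Nat.dvd_of_mod_eq_zero h)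
  have hrm : N % m < m := Nat.mod_lt _ hm0
  have hq1 : 1 ≤ q := (Nat.one_le_div_iff hm0).mpr hm2
  set g : ℕ → ℕ := fun k => (k * N + (m - 1)) / m with hg
  have hgle : ∀ j k, g k ≤ j ↔ k * N ≤ m * j := by
    intro j k
    rw [hg]
    simp only
    rw [Nat.div_le_iff_le_mul_add_pred hm0]
    omega
  -- filter = Ico
  have hfilter : ∀ k, 1 ≤ k → k ≤ m →
      (Finset.range N).filter (fun j => 1 + m * j / N = k) = Finset.Ico (g (k-1)) (g k) := by
    intro k hk1 hk2
    have hgN : g k ≤ N := (hgle N k).mpr (Nat.mul_le_mul_right N hk2)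
    ext j
    simp only [Finset.mem_filter, Finset.mem_range, Finset.mem_Ico]
    have hdiv : m * j / N = k - 1 ↔ (k-1) * N ≤ m * j ∧ m * j < k * N := by
      rw [show (m*j/N = k-1 ↔ k-1 ≤ m*j/N ∧ m*j/N < k) from by omega,
        Nat.le_div_iff_mul_le hN0, Nat.div_lt_iff_lt_mul hN0]
    constructor
    · rintro ⟨hjN, hk⟩
      have hx : m * j / N = k - 1 := by omega
      rw [hdiv] at hx
      refine ⟨(hgle j (k-1)).mpr hx.1, ?_⟩
      by_contra hc
      push_neg at hc
      have := (hgle j k).mp hc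
      omega
    · rintro ⟨h1, h2⟩
      have hA : (k-1)*N ≤ m*j := (hgle j (k-1)).mp h1
      have hB : m*j < k*N := by
        by_contra hc
        push_neg at hc
        exact absurd ((hgle j k).mpr hc) (by omega)
      have := hdiv.mpr ⟨hA, hB⟩
      exact ⟨lt_of_lt_of_le h2 hgN, by omega⟩
  have hcard : ∀ k, 1 ≤ k → k ≤ m →
      ((Finset.range N).filter (fun j => 1 + m * j / N = k)).card = g k - g (k-1) := by
    intro k hk1 hk2
    rw [hfilter k hk1 hk2, Nat.card_Ico]
  -- bounds
  have hNlt : N < m * (q + 1) := by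
    have : m * (q+1) = m * q + m := by ring
    omega
  have hub : ∀ k, 1 ≤ k → g k ≤ g (k-1) + (q + 1) := by
    intro k hk1
    have h1 : (k-1)*N ≤ m * g (k-1) := (hgle _ _).mp le_rfl
    have hkN : k*N = (k-1)*N + N := by
      rw [Nat.sub_one_mul]
      have := Nat.le_mul_of_pos_left N (show 0 < k by omega)
      omega
    show (k * N + (m - 1)) / m ≤ g (k-1) + (q + 1)
    rw [Nat.div_le_iff_le_mul_add_pred hm0]
    have hx : m * (g (k-1) + (q+1)) = m * g (k-1) + m*q + m := by ring
    omega
  have hlb : ∀ k, 1 ≤ k → g (k-1) + q ≤ g k := by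
    intro k hk1
    have h1 : m * g (k-1) ≤ (k-1)*N + (m-1) := by
      rw [mul_comm]
      exact Nat.div_mul_le_self _ m
    have h2 : m * q ≤ N := by omega
    have hkN : k*N = (k-1)*N + N := by
      rw [Nat.sub_one_mul]
      have := Nat.le_mul_of_pos_left N (show 0 < k by omega)
      omega
    show g (k-1) + q ≤ (k * N + (m - 1)) / m
    rw [Nat.le_div_iff_mul_le hm0]
    have hx : (g (k-1) + q) * m = m * g (k-1) + m * q := by ring
    omega
  have hg0 : g 0 = 0 := by
    rw [hg]; simp only
    rw [zero_mul, zero_add]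
    exact Nat.div_eq_of_lt (by omega)
  have hg1 : g 1 = q + 1 := by
    apply le_antisymm
    · rw [hg]; simp only
      rw [Nat.div_le_iff_le_mul_add_pred hm0]
      have : m * (q+1) = m*q + m := by ring
      omega
    · rw [hg]; simp only
      rw [Nat.le_div_iff_mul_le hm0]
      have : (q+1)*m = m*q + m := by ring
      omega
  -- sum of cards = N
  have hsum : ∑ k ∈ Finset.Icc 1 m, ((Finset.range N).filter (fun j => 1 + m * j / N = k)).card
      = N := by
    have := Finset.card_eq_sum_card_fiberwise (f := fun j => 1 + m * j / N)
      (s := Finset.range N) (t := Finset.Icc 1 m) ?_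
    · rw [← this, Finset.card_range]
    · intro j hj
      rw [Finset.mem_coe, Finset.mem_range] at hj
      rw [Finset.mem_coe, Finset.mem_Icc]
      have h5 : m * j / N < m := (Nat.div_lt_iff_lt_mul hN0).mpr
        (Nat.mul_lt_mul_of_pos_left hj hm0)
      show 1 ≤ 1 + m * j / N ∧ 1 + m * j / N ≤ m
      exact ⟨Nat.le_add_right 1 _, by rw [Nat.add_comm]; exact h5⟩
  -- existence of a k with card = q
  have hex : ∃ k₀, 1 ≤ k₀ ∧ k₀ ≤ m ∧ g k₀ - g (k₀ - 1) = q := by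
    by_contra hc
    push_neg at hc
    have hall : ∀ k ∈ Finset.Icc 1 m,
        ((Finset.range N).filter (fun j => 1 + m * j / N = k)).card = q + 1 := by
      intro k hk
      rw [Finset.mem_Icc] at hk
      rw [hcard k hk.1 hk.2]
      have h1 := hub k hk.1
      have h2 := hlb k hk.1
      have h3 := hc k hk.1 hk.2
      omega
    rw [Finset.sum_congr rfl hall, Finset.sum_const, Nat.card_Icc] at hsum
    have : (m + 1 - 1) • (q+1) = m * q + m := by
      simp [smul_eq_mul]; ring
    omega
  obtain ⟨k₀, hk₀1, hk₀2, hk₀q⟩ := hex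
  -- values of floorMulProb
  have hval : ∀ k, 1 ≤ k → k ≤ m →
      floorMulProb w m k = ((g k - g (k-1) : ℕ) : ℚ) / N := by
    intro k hk1 hk2
    rw [floorMulProb, ← hNdef, hcard k hk1 hk2, hNdef]
    push_cast
    ring
  have hNQ : (0:ℚ) < (N:ℚ) := by exact_mod_cast hN0
  have hsup : (Finset.Icc 1 m).sup' (Finset.nonempty_Icc.mpr hm) (floorMulProb w m)
      = ((q:ℚ) + 1) / N := by
    apply le_antisymm
    · apply Finset.sup'_le
      intro k hk
      rw [Finset.mem_Icc] at hk
      rw [hval k hk.1 hk.2]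
      gcongr
      have hx : g k - g (k-1) ≤ q + 1 := by have := hub k hk.1; omega
      exact_mod_cast hx
    · have h1 : floorMulProb w m 1 = ((q:ℚ) + 1) / N := by
        rw [hval 1 le_rfl (by omega)]
        norm_num [hg1, hg0]
      rw [← h1]
      exact Finset.le_sup' _ (Finset.mem_Icc.mpr ⟨le_rfl, hm⟩)
  have hinf : (Finset.Icc 1 m).inf' (Finset.nonempty_Icc.mpr hm) (floorMulProb w m)
      = (q:ℚ) / N := by
    apply le_antisymm
    · have h1 : floorMulProb w m k₀ = (q:ℚ) / N := by
        rw [hval k₀ hk₀1 hk₀2, hk₀q]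
      rw [← h1]
      exact Finset.inf'_le _ (Finset.mem_Icc.mpr ⟨hk₀1, hk₀2⟩)
    · apply Finset.le_inf'
      intro k hk
      rw [Finset.mem_Icc] at hk
      rw [hval k hk.1 hk.2]
      gcongr
      have hx : q ≤ g k - g (k-1) := by have := hlb k hk.1; omega
      exact_mod_cast hx
  rw [hsup, hinf]
  have hq0 : (q:ℚ) ≠ 0 := by
    have : (0:ℚ) < (q:ℚ) := by exact_mod_cast hq1
    positivity
  have hN0' : (N:ℚ) ≠ 0 := ne_of_gt hNQ
  field_simp
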